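/- Let G be a bipartite graph without isolated vertices with bipartition A ∪ B, and let S = (v_1, ..., v_{2k}) be a Grundy total dominating sequence of G (i.e., a total dominating sequence of maximum length 2k = γ_gr^t(G)). Then the underlying vertex set of S contains exactly k vertices of A and exactly k vertices of B. -/

import Mathlib

/-- `S` is a total dominating set of `G`: every vertex has a neighbor in `S`. -/
def IsTotalDomSet {V : Type*} (G : SimpleGraph V) (S : Set V) : Prop :=
  ∀ v : V, ∃ u ∈ S, G.Adj v u

/-- `l` is a legal sequence of `G`: the vertices are distinct and every vertex
(except possibly the first) totally dominates a vertex not totally dominated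
by the previous vertices. -/
def IsLegalSeq {V : Type*} (G : SimpleGraph V) (l : List V) : Prop :=
  l.Nodup ∧ ∀ i : Fin l.length, 0 < (i : ℕ) →
    ∃ w : V, G.Adj (l.get i) w ∧ ∀ j : Fin l.length, (j : ℕ) < (i : ℕ) → ¬ G.Adj (l.get j) w

/-- `l` is a total dominating sequence of `G`. -/
def IsTotalDomSeq {V : Type*} (G : SimpleGraph V) (l : List V) : Prop :=
  IsLegalSeq G l ∧ IsTotalDomSet G {v | v ∈ l}

/-- The Grundy total domination number of `G`: the maximum length of a total
dominating sequence. -/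
noncomputable def grundyTotalDomNum {V : Type*} (G : SimpleGraph V) : ℕ :=
  sSup {k : ℕ | ∃ l : List V, IsTotalDomSeq G l ∧ l.length = k}

/-- The total domination number of `G`: the minimum cardinality of a total
dominating set. -/
noncomputable def totalDomNum {V : Type*} (G : SimpleGraph V) : ℕ :=
  sInf {k : ℕ | ∃ S : Set V, IsTotalDomSet G S ∧ S.ncard = k}

/-- `A`, `B` is a bipartition of `G`. -/
def IsBipartitionOf {V : Type*} (G : SimpleGraph V) (A B : Set V) : Prop :=
  (∀ v : V, (v ∈ A ∧ v ∉ B) ∨ (v ∈ B ∧ v ∉ A)) ∧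
  ∀ ⦃u v : V⦄, G.Adj u v → (u ∈ A ∧ v ∈ B) ∨ (u ∈ B ∧ v ∈ A)

/-- `G` has no false twins: distinct vertices have distinct open neighborhoods. -/
def FalseTwinFree {V : Type*} (G : SimpleGraph V) : Prop :=
  ∀ u v : V, u ≠ v → G.neighborSet u ≠ G.neighborSet v

/-- `G` has no isolated vertices. -/
def NoIsolatedVerts {V : Type*} (G : SimpleGraph V) : Prop :=
  ∀ v : V, ∃ u : V, G.Adj v u

section Aux

variable {V : Type*} {G : SimpleGraph V}

/-- Legal sequences are closed under sublists. -/
lemma IsLegalSeq.sublist {l l' : List V} (hl : IsLegalSeq G l) (h : List.Sublist l' l) :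
    IsLegalSeq G l' := by
  obtain ⟨f, hf⟩ := List.sublist_iff_exists_fin_orderEmbedding_get_eq.mp h
  refine ⟨hl.1.sublist h, fun i hi => ?_⟩
  have h0 : (0 : ℕ) < l'.length := lt_of_le_of_lt (Nat.zero_le _) i.2
  have hlt : f ⟨0, h0⟩ < f i := f.strictMono (show (⟨0, h0⟩ : Fin l'.length) < i from hi)
  have hfi : 0 < ((f i : Fin l.length) : ℕ) := lt_of_le_of_lt (Nat.zero_le _) hlt
  obtain ⟨w, hw1, hw2⟩ := hl.2 (f i) hfi
  refine ⟨w, by rw [hf i]; exact hw1, fun j hj => ?_⟩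
  have : f j < f i := f.strictMono (show j < i from hj)
  rw [hf j]
  exact hw2 (f j) this

/-- Appending a vertex that dominates a previously-undominated vertex
preserves legality. -/
lemma legal_append {l : List V} (hl : IsLegalSeq G l) {u v : V}
    (hadj : G.Adj u v) (hnd : ∀ x ∈ l, ¬ G.Adj x v) :
    IsLegalSeq G (l ++ [u]) := by
  have hu : u ∉ l := fun h => hnd u h hadj
  constructor
  · simpa [List.nodup_append] using ⟨hl.1, fun a ha hau => hu (hau ▸ ha)⟩
  · intro i hi
    have hlen : (l ++ [u]).length = l.length + 1 := by simp
    have hiv : (i : ℕ) < l.length + 1 := by omega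
    by_cases hc : (i : ℕ) < l.length
    · obtain ⟨w, hw1, hw2⟩ := hl.2 ⟨(i : ℕ), hc⟩ hi
      refine ⟨w, ?_, fun j hj => ?_⟩
      · have : (l ++ [u]).get i = l.get ⟨i, hc⟩ := by
          simp [List.get_eq_getElem, List.getElem_append_left hc]
        rwa [this]
      · have hjv : (j : ℕ) < l.length := lt_trans hj hc
        have : (l ++ [u]).get j = l.get ⟨j, hjv⟩ := by
          simp [List.get_eq_getElem, List.getElem_append_left hjv]
        rw [this]
        exact hw2 ⟨j, hjv⟩ hj
    · have hieq : (i : ℕ) = l.length := by omega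
      have hgi : (l ++ [u]).get i = u := by
        simp [List.get_eq_getElem, hieq]
      refine ⟨v, by rwa [hgi], fun j hj => ?_⟩
      have hjv : (j : ℕ) < l.length := by omega
      have : (l ++ [u]).get j = l.get ⟨j, hjv⟩ := by
        simp [List.get_eq_getElem, List.getElem_append_left hjv]
      rw [this]
      exact hnd _ (List.get_mem l _)

/-- Any legal sequence extends to a total dominating sequence. -/
lemma exists_tds_ge [Fintype V] (hiso : NoIsolatedVerts G) :
    ∀ n (l : List V), IsLegalSeq G l → Fintype.card V - l.length ≤ n →
      ∃ l', IsTotalDomSeq G l' ∧ l.length ≤ l'.length := by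
  intro n
  induction n with
  | zero =>
    intro l hl hn
    by_cases hd : IsTotalDomSet G {v | v ∈ l}
    · exact ⟨l, ⟨hl, hd⟩, le_refl _⟩
    · exfalso
      simp only [IsTotalDomSet, not_forall] at hd
      obtain ⟨v, hv⟩ := hd
      push_neg at hv
      obtain ⟨u, hu⟩ := hiso v
      have hl' : IsLegalSeq G (l ++ [u]) := legal_append hl hu.symm
        (fun x hx hadj => hv x hx hadj.symm)
      have := hl'.1.length_le_card
      simp at this
      omega
  | succ n ih =>
    intro l hl hn
    by_cases hd : IsTotalDomSet G {v | v ∈ l}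
    · exact ⟨l, ⟨hl, hd⟩, le_refl _⟩
    · simp only [IsTotalDomSet, not_forall] at hd
      obtain ⟨v, hv⟩ := hd
      push_neg at hv
      obtain ⟨u, hu⟩ := hiso v
      have hl' : IsLegalSeq G (l ++ [u]) := legal_append hl hu.symm
        (fun x hx hadj => hv x hx hadj.symm)
      have hlen : (l ++ [u]).length = l.length + 1 := by simp
      obtain ⟨l'', h1, h2⟩ := ih (l ++ [u]) hl' (by omega)
      exact ⟨l'', h1, by omega⟩

/-- The length of any legal sequence is at most the Grundy total domination
number. -/
lemma length_le_grundy [Fintype V] (hiso : NoIsolatedVerts G) {l : List V}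
    (hl : IsLegalSeq G l) : l.length ≤ grundyTotalDomNum G := by
  obtain ⟨l', hl', hle⟩ := exists_tds_ge hiso (Fintype.card V - l.length) l hl (le_refl _)
  refine hle.trans (le_csSup ⟨Fintype.card V, ?_⟩ ⟨l', hl', rfl⟩)
  rintro k ⟨m, hm, rfl⟩
  exact hm.1.1.length_le_card

/-- From a legal sequence within one side of a bipartition, one can double its
length by appending witnesses in reverse order. -/
lemma double_legal {A B : Set V} (hbip : IsBipartitionOf G A B)
    (hiso : NoIsolatedVerts G) {m : List V} (hm : IsLegalSeq G m)
    (hmA : ∀ v ∈ m, v ∈ A) :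
    ∃ w : List V, IsLegalSeq G (m ++ w) ∧ w.length = m.length := by
  classical
  set n := m.length with hn
  -- no edges inside A
  have haa : ∀ u v : V, u ∈ A → v ∈ A → ¬ G.Adj u v := by
    intro u v hu hv hadj
    rcases hbip.2 hadj with ⟨_, hvB⟩ | ⟨huB, _⟩
    · rcases hbip.1 v with ⟨_, h⟩ | ⟨_, h⟩ <;> tauto
    · rcases hbip.1 u with ⟨_, h⟩ | ⟨_, h⟩ <;> tauto
  -- choose witnesses
  have hwex : ∀ i : Fin n, ∃ w : V, G.Adj (m.get i) w ∧
      ∀ j : Fin n, (j : ℕ) < (i : ℕ) → ¬ G.Adj (m.get j) w := by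
    intro i
    by_cases h : 0 < (i : ℕ)
    · exact hm.2 i h
    · obtain ⟨u, hu⟩ := hiso (m.get i)
      exact ⟨u, hu, fun j hj => absurd hj (by omega)⟩
  choose w hw1 hw2 using hwex
  -- each witness is in B, hence not in A
  have hwB : ∀ i : Fin n, w i ∉ A := by
    intro i hiA
    have hmem : m.get i ∈ A := hmA _ (List.get_mem m _)
    exact haa _ _ hmem hiA (hw1 i)
  -- witnesses are distinct
  have hwinj : Function.Injective w := by
    intro i j hij
    by_contra hne
    rcases lt_or_gt_of_ne (fun h : i = j => hne h) with h | h
    · exact hw2 j i h (hij ▸ hw1 i)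
    · exact hw2 i j h (hij.symm ▸ hw1 j)
  -- the reversed witness list
  refine ⟨List.ofFn (fun q : Fin n => w ⟨n - 1 - (q : ℕ), by omega⟩), ?_, by simp⟩
  set W := List.ofFn (fun q : Fin n => w ⟨n - 1 - (q : ℕ), by omega⟩) with hW
  have hWlen : W.length = n := by simp [hW]
  have hLlen : (m ++ W).length = n + n := by simp [hW, hn]
  have hrevinj : Function.Injective
      (fun q : Fin n => w ⟨n - 1 - (q : ℕ), by omega⟩) := by
    intro q1 q2 h
    have := hwinj h
    have h1 : n - 1 - (q1 : ℕ) = n - 1 - (q2 : ℕ) := congrArg Fin.val this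
    have hq1 : (q1 : ℕ) < n := q1.2
    have hq2 : (q2 : ℕ) < n := q2.2
    exact Fin.ext (by omega)
  have hWnodup : W.Nodup := List.nodup_ofFn.mpr hrevinj
  have hWget : ∀ (q : ℕ) (hq : q < W.length),
      W[q] = w ⟨n - 1 - q, by omega⟩ := by
    intro q hq
    simp [hW]
  constructor
  · -- Nodup
    rw [List.nodup_append]
    refine ⟨hm.1, hWnodup, fun x hx y hx' hxy => ?_⟩
    have hxA : x ∈ A := hmA x hx
    rw [hW, List.mem_ofFn] at hx'
    obtain ⟨q, hq⟩ := hx'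
    subst hxy
    exact hwB _ (hq ▸ hxA)
  · -- legality
    intro i hi
    have hiv : (i : ℕ) < n + n := by omega
    by_cases hc : (i : ℕ) < n
    · obtain ⟨x, hx1, hx2⟩ := hm.2 ⟨(i : ℕ), hc⟩ hi
      refine ⟨x, ?_, fun j hj => ?_⟩
      · have : (m ++ W).get i = m.get ⟨i, hc⟩ := by
          simp [List.get_eq_getElem, List.getElem_append_left hc]
        rwa [this]
      · have hjv : (j : ℕ) < n := lt_trans hj hc
        have : (m ++ W).get j = m.get ⟨j, hjv⟩ := by
          simp [List.get_eq_getElem, List.getElem_append_left hjv]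
        rw [this]
        exact hx2 ⟨j, hjv⟩ hj
    · -- second half
      have hnc : n ≤ (i : ℕ) := by omega
      set q : ℕ := (i : ℕ) - n with hq
      have hqn : q < n := by omega
      have hnpos : 0 < n := by omega
      set t : ℕ := n - 1 - q with ht
      have htn : t < n := by omega
      have hgi : (m ++ W).get i = w ⟨t, htn⟩ := by
        have h1 : (m ++ W).get i = W[(i : ℕ) - m.length]'(by
            simp [hWlen]; omega) := by
          simp [List.get_eq_getElem]
          rw [List.getElem_append_right (by omega)]
        rw [h1, hWget]
      refine ⟨m.get ⟨t, htn⟩, by rw [hgi]; exact (hw1 ⟨t, htn⟩).symm,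
        fun j hj => ?_⟩
      by_cases hjc : (j : ℕ) < n
      · have : (m ++ W).get j = m.get ⟨j, hjc⟩ := by
          simp [List.get_eq_getElem, List.getElem_append_left hjc]
        rw [this]
        exact haa _ _ (hmA _ (List.get_mem m _)) (hmA _ (List.get_mem m _))
      · have hjn : n ≤ (j : ℕ) := by omega
        set q' : ℕ := (j : ℕ) - n with hq'
        have hq'n : q' < n := by omega
        set t' : ℕ := n - 1 - q' with ht'
        have ht'n : t' < n := by omega
        have hgj : (m ++ W).get j = w ⟨t', ht'n⟩ := by
          have h1 : (m ++ W).get j = W[(j : ℕ) - m.length]'(by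
              simp [hWlen]; omega) := by
            simp [List.get_eq_getElem]
            rw [List.getElem_append_right (by omega)]
          rw [h1, hWget]
        rw [hgj]
        have htt' : t < t' := by omega
        intro hadj
        exact hw2 ⟨t', ht'n⟩ ⟨t, htn⟩ htt' hadj.symm

/-- Bipartitions are symmetric. -/
lemma IsBipartitionOf.symm {A B : Set V} (h : IsBipartitionOf G A B) :
    IsBipartitionOf G B A :=
  ⟨fun v => (h.1 v).symm, fun _ _ hadj => (h.2 hadj).symm⟩

/-- The key inequality: twice the number of `A`-vertices of a legal sequence is
at most the Grundy total domination number. -/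
lemma two_mul_side_le [Fintype V] {A B : Set V} (hbip : IsBipartitionOf G A B)
    (hiso : NoIsolatedVerts G) {l : List V} (hl : IsLegalSeq G l) :
    2 * ({v | v ∈ l} ∩ A).ncard ≤ grundyTotalDomNum G := by
  classical
  set lA := l.filter (fun v => decide (v ∈ A)) with hlA
  have hsub : List.Sublist lA l := List.filter_sublist
  have hlegalA : IsLegalSeq G lA := hl.sublist hsub
  have hmemA : ∀ v ∈ lA, v ∈ A := by
    intro v hv
    rw [hlA, List.mem_filter] at hv
    simpa using hv.2
  have hcard : ({v | v ∈ l} ∩ A).ncard = lA.length := by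
    have hset : {v | v ∈ l} ∩ A = {v | v ∈ lA} := by
      ext v
      simp [hlA, List.mem_filter]
    rw [hset]
    have : {v | v ∈ lA} = (lA.toFinset : Set V) := by
      ext v; simp
    rw [this, Set.ncard_coe_finset, List.toFinset_card_of_nodup hlegalA.1]
  obtain ⟨W, hW, hWlen⟩ := double_legal hbip hiso hlegalA hmemA
  have := length_le_grundy hiso hW
  have hlen : (lA ++ W).length = 2 * lA.length := by
    simp [hWlen]; omega
  omega

end Aux

/-- In a bipartite graph without isolated vertices with bipartition
`A ∪ B`, any Grundy total dominating sequence (a total dominating sequence of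
maximum length `2 * k`) contains exactly `k` vertices of `A` and `k` of `B`. -/
theorem grundy_total_dom_seq_balanced {V : Type*} [Fintype V] (G : SimpleGraph V)
    (A B : Set V) (hbip : IsBipartitionOf G A B) (hiso : NoIsolatedVerts G)
    (k : ℕ) (l : List V) (hl : IsTotalDomSeq G l)
    (hlen : l.length = 2 * k) (hmax : l.length = grundyTotalDomNum G) :
    ({v | v ∈ l} ∩ A).ncard = k ∧ ({v | v ∈ l} ∩ B).ncard = k := by
  classical
  have hA : 2 * ({v | v ∈ l} ∩ A).ncard ≤ grundyTotalDomNum G :=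
    two_mul_side_le hbip hiso hl.1
  have hB : 2 * ({v | v ∈ l} ∩ B).ncard ≤ grundyTotalDomNum G :=
    two_mul_side_le hbip.symm hiso hl.1
  -- the two parts partition the underlying set
  have hdisj : Disjoint ({v | v ∈ l} ∩ A) ({v | v ∈ l} ∩ B) := by
    rw [Set.disjoint_left]
    rintro v ⟨-, hvA⟩ ⟨-, hvB⟩
    rcases hbip.1 v with ⟨_, h⟩ | ⟨_, h⟩ <;> tauto
  have hunion : ({v | v ∈ l} ∩ A) ∪ ({v | v ∈ l} ∩ B) = {v | v ∈ l} := by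
    ext v
    constructor
    · rintro (⟨h, -⟩ | ⟨h, -⟩) <;> exact h
    · intro h
      rcases hbip.1 v with ⟨hA', -⟩ | ⟨hB', -⟩
      · exact Or.inl ⟨h, hA'⟩
      · exact Or.inr ⟨h, hB'⟩
  have hsum : ({v | v ∈ l} ∩ A).ncard + ({v | v ∈ l} ∩ B).ncard
      = ({v | v ∈ l} : Set V).ncard := by
    rw [← Set.ncard_union_eq hdisj (Set.toFinite _) (Set.toFinite _), hunion]
  have hcard : ({v | v ∈ l} : Set V).ncard = l.length := by
    have : ({v | v ∈ l} : Set V) = (l.toFinset : Set V) := by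
      ext v; simp
    rw [this, Set.ncard_coe_finset, List.toFinset_card_of_nodup hl.1.1]
  omega
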